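/- Let T be a finite tree with a perfect matching M and |V(T)| ≥ 2, and let xy ∈ M. Then T_B^3 has a Hamiltonian path from x to y. -/

import Mathlib

/-- The `t`-th bi-power of a graph `G`: two vertices are adjacent iff their
distance in `G` is odd and at most `t`. -/
def SimpleGraph.biPower {V : Type*} (G : SimpleGraph V) (t : ℕ) : SimpleGraph V where
  Adj x y := Odd (G.dist x y) ∧ G.dist x y ≤ t
  symm := ⟨fun x y h => by show Odd (G.dist y x) ∧ G.dist y x ≤ t; rw [SimpleGraph.dist_comm]; exact h⟩
  loopless := ⟨fun x h => by simp [SimpleGraph.dist_self, Nat.odd_iff] at h⟩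

open SimpleGraph

universe u
variable {V : Type u} [DecidableEq V]

lemma path_length_eq_dist {T : SimpleGraph V} (hT : T.IsTree) {u v : V} {p : T.Walk u v}
    (hp : p.IsPath) : p.length = T.dist u v := by
  obtain ⟨w, hw⟩ := hT.isConnected.exists_walk_length_eq_dist u v
  have h1 : p = w.bypass := (hT.existsUnique_path u v).unique hp w.bypass_isPath
  have h2 := w.length_bypass_le
  have h3 := SimpleGraph.dist_le p
  rw [h1] at h3 ⊢
  omega

lemma dist_split {T : SimpleGraph V} (hT : T.IsTree) {u v w : V} {p : T.Walk u v}
    (hp : p.IsPath) (hw : w ∈ p.support) : T.dist u v = T.dist u w + T.dist w v := by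
  have e1 := path_length_eq_dist hT (hp.takeUntil hw)
  have e2 := path_length_eq_dist hT (hp.dropUntil hw)
  have e3 := path_length_eq_dist hT hp
  have := congrArg SimpleGraph.Walk.length (p.take_spec hw)
  rw [SimpleGraph.Walk.length_append] at this
  omega

lemma dist_concat_eq {T : SimpleGraph V} (hT : T.IsTree) {u v w : V} {p : T.Walk u v}
    (hp : p.IsPath) (h : T.Adj v w) (hw : w ∉ p.support) :
    T.dist u w = p.length + 1 := by
  have hcp : (p.concat h).IsPath := by
    rw [SimpleGraph.Walk.isPath_def, SimpleGraph.Walk.support_concat]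
    simp only [List.concat_eq_append, List.nodup_append]
    exact ⟨hp.support_nodup, List.nodup_singleton w, by
      intro a ha b hb; simp at hb; subst hb; exact fun h => hw (h ▸ ha)⟩
  have := path_length_eq_dist hT hcp
  rw [SimpleGraph.Walk.length_concat] at this
  omega

lemma adj_dist_cases {T : SimpleGraph V} (hT : T.IsTree) {x z : V} (hxz : T.Adj x z) (v : V) :
    T.dist v x = T.dist v z + 1 ∨ T.dist v z = T.dist v x + 1 := by
  obtain ⟨p, hp, -⟩ := hT.existsUnique_path v x
  by_cases hz : z ∈ p.support
  · left
    have := dist_split hT hp hz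
    rwa [(SimpleGraph.dist_eq_one_iff_adj).2 hxz.symm] at this
  · right
    have := dist_concat_eq hT hp hxz hz
    rw [path_length_eq_dist hT hp] at this
    omega

lemma crossing {T : SimpleGraph V} (hT : T.IsTree) {x z : V} (hxz : T.Adj x z) {u w : V}
    (huw : T.Adj u w) (hu : T.dist u x = T.dist u z + 1) (hw : T.dist w z = T.dist w x + 1) :
    u = z ∧ w = x := by
  set k := T.dist u z with hk
  have hconn := hT.isConnected
  have hd1 : T.dist w u = 1 := (SimpleGraph.dist_eq_one_iff_adj).2 huw.symm
  have hd2 : T.dist u w = 1 := (SimpleGraph.dist_eq_one_iff_adj).2 huw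
  have t1 : T.dist w x ≤ T.dist w u + T.dist u x := hconn.dist_triangle
  have t2 : T.dist u x ≤ T.dist u w + T.dist w x := hconn.dist_triangle
  have t3 : T.dist w z ≤ T.dist w u + T.dist u z := hconn.dist_triangle
  have hwx : T.dist w x = k := by omega
  have hwz : T.dist w z = k + 1 := by omega
  -- unique path from w to x
  obtain ⟨R, hR, -⟩ := hT.existsUnique_path w x
  have hRlen : R.length = k := by rw [path_length_eq_dist hT hR, hwx]
  have hzR : z ∉ R.support := by
    intro hzmem
    have := dist_split hT hR hzmem
    rw [hwx, hwz, (SimpleGraph.dist_eq_one_iff_adj).2 hxz.symm] at this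
    omega
  have huR : u ∉ R.support := by
    intro humem
    have := dist_split hT hR humem
    rw [hwx, hd1, hu] at this
    omega
  have hWpath : (SimpleGraph.Walk.cons huw R).IsPath := hR.cons huR
  -- z lies on the unique path from u to x
  have hzW : z ∈ (SimpleGraph.Walk.cons huw R).support := by
    by_contra hzW
    have := dist_concat_eq hT hWpath hxz hzW
    -- this : T.dist u z = (cons huw R).length + 1
    rw [SimpleGraph.Walk.length_cons, hRlen] at this
    omega
  rw [SimpleGraph.Walk.support_cons] at hzW
  have huz : u = z := by
    rcases List.mem_cons.1 hzW with h | h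
    · exact h.symm
    · exact absurd h hzR
  refine ⟨huz, ?_⟩
  have : T.dist w x = 0 := by rw [hwx, hk, huz, SimpleGraph.dist_self]
  exact (hconn.dist_eq_zero_iff.1 this)

section sides
variable {T : SimpleGraph V} {x z : V}

/-- z-side membership -/
def ZS (T : SimpleGraph V) (x z v : V) : Prop := T.dist v x = T.dist v z + 1
/-- x-side membership -/
def XS (T : SimpleGraph V) (x z v : V) : Prop := T.dist v z = T.dist v x + 1

lemma not_both {v : V} (h1 : ZS T x z v) (h2 : XS T x z v) : False := by
  unfold ZS XS at *; omega

lemma zs_of_not_xs (hT : T.IsTree) (hxz : T.Adj x z) {v : V} (h : ¬ XS T x z v) : ZS T x z v :=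
  (adj_dist_cases hT hxz v).resolve_right h

lemma xs_of_not_zs (hT : T.IsTree) (hxz : T.Adj x z) {v : V} (h : ¬ ZS T x z v) : XS T x z v :=
  (adj_dist_cases hT hxz v).resolve_left h

lemma zs_z (hxz : T.Adj x z) : ZS T x z z := by
  unfold ZS
  rw [SimpleGraph.dist_self, SimpleGraph.dist_comm, (SimpleGraph.dist_eq_one_iff_adj).2 hxz]

lemma xs_x (hxz : T.Adj x z) : XS T x z x := by
  unfold XS
  rw [SimpleGraph.dist_self, SimpleGraph.dist_comm, (SimpleGraph.dist_eq_one_iff_adj).2 hxz.symm]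

lemma crossing' (hT : T.IsTree) (hxz : T.Adj x z) {u w : V} (huw : T.Adj u w)
    (hu : ZS T x z u) (hw : XS T x z w) : u = z ∧ w = x :=
  crossing hT hxz huw hu hw

lemma zs_closed (hT : T.IsTree) (hxz : T.Adj x z) {u v : V} (p : T.Walk u v)
    (hp : p.IsPath) (hu : ZS T x z u) (hv : ZS T x z v) : ∀ w ∈ p.support, ZS T x z w := by
  induction p with
  | nil => intro w hw; simp at hw; rwa [hw]
  | @cons a b c h q ih =>
    rw [SimpleGraph.Walk.cons_isPath_iff] at hp
    intro w hw
    rw [SimpleGraph.Walk.support_cons, List.mem_cons] at hw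
    rcases hw with rfl | hw
    · exact hu
    by_cases hb : ZS T x z b
    · exact ih hp.1 hb hv w hw
    · exfalso
      have hbx : XS T x z b := xs_of_not_zs hT hxz hb
      obtain ⟨haz, -⟩ := crossing' hT hxz h hu hbx
      obtain ⟨d, hd, hdfst, hdsnd⟩ := q.exists_boundary_dart (setOf (XS T x z)) hbx
        (fun hc => not_both hv hc)
      have hds : ZS T x z d.snd := zs_of_not_xs hT hxz hdsnd
      obtain ⟨hdz, -⟩ := crossing' hT hxz d.adj.symm hds hdfst
      have hmem := q.dart_snd_mem_support_of_mem_darts hd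
      rw [hdz, ← haz] at hmem
      exact hp.2 hmem

lemma xs_closed (hT : T.IsTree) (hxz : T.Adj x z) {u v : V} (p : T.Walk u v)
    (hp : p.IsPath) (hu : XS T x z u) (hv : XS T x z v) : ∀ w ∈ p.support, XS T x z w := by
  induction p with
  | nil => intro w hw; simp at hw; rwa [hw]
  | @cons a b c h q ih =>
    rw [SimpleGraph.Walk.cons_isPath_iff] at hp
    intro w hw
    rw [SimpleGraph.Walk.support_cons, List.mem_cons] at hw
    rcases hw with rfl | hw
    · exact hu
    by_cases hb : XS T x z b
    · exact ih hp.1 hb hv w hw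
    · exfalso
      have hbz : ZS T x z b := zs_of_not_xs hT hxz hb
      obtain ⟨-, hax⟩ := crossing' hT hxz h.symm hbz hu
      obtain ⟨d, hd, hdfst, hdsnd⟩ := q.exists_boundary_dart (setOf (ZS T x z)) hbz
        (fun hc => not_both hc hv)
      have hds : XS T x z d.snd := xs_of_not_zs hT hxz hdsnd
      obtain ⟨-, hdx⟩ := crossing' hT hxz d.adj hdfst hds
      have hmem := q.dart_snd_mem_support_of_mem_darts hd
      rw [hdx, ← hax] at hmem
      exact hp.2 hmem

end sides

section induceSec
variable {T : SimpleGraph V} {A : Set V}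

lemma lift_walk : ∀ {u v : V} (p : T.Walk u v) (hsup : ∀ w ∈ p.support, w ∈ A)
    (hu : u ∈ A) (hv : v ∈ A), ∃ q : (T.induce A).Walk ⟨u, hu⟩ ⟨v, hv⟩, q.length = p.length := by
  intro u v p
  induction p with
  | nil => intro _ hu _; exact ⟨SimpleGraph.Walk.nil, rfl⟩
  | @cons a b c h q ih =>
    intro hsup hu hv
    have hb : b ∈ A := hsup b (by simp [SimpleGraph.Walk.support_cons])
    obtain ⟨q', hq'⟩ := ih (fun w hw => hsup w (by simp [SimpleGraph.Walk.support_cons, hw])) hb hv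
    exact ⟨SimpleGraph.Walk.cons (by exact h) q', congrArg (· + 1) hq'⟩

lemma induce_dist_eq (hT : T.IsTree)
    (hcl : ∀ {u v : V} (p : T.Walk u v), p.IsPath → u ∈ A → v ∈ A → ∀ w ∈ p.support, w ∈ A)
    {u v : V} (hu : u ∈ A) (hv : v ∈ A) :
    (T.induce A).dist ⟨u, hu⟩ ⟨v, hv⟩ = T.dist u v := by
  obtain ⟨p, hp, -⟩ := hT.existsUnique_path u v
  obtain ⟨q, hq⟩ := lift_walk p (hcl p hp hu hv) hu hv
  have h1 : (T.induce A).dist ⟨u, hu⟩ ⟨v, hv⟩ ≤ T.dist u v := by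
    calc (T.induce A).dist ⟨u, hu⟩ ⟨v, hv⟩ ≤ q.length := SimpleGraph.dist_le q
    _ = T.dist u v := by rw [hq, path_length_eq_dist hT hp]
  have hreach : (T.induce A).Reachable ⟨u, hu⟩ ⟨v, hv⟩ := ⟨q⟩
  obtain ⟨r, hr⟩ := hreach.exists_walk_length_eq_dist
  have h2 : T.dist u v ≤ (T.induce A).dist ⟨u, hu⟩ ⟨v, hv⟩ := by
    have := SimpleGraph.dist_le (r.map (SimpleGraph.Embedding.induce A).toHom)
    rwa [SimpleGraph.Walk.length_map, hr] at this
  omega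

lemma induce_isTree (hT : T.IsTree)
    (hcl : ∀ {u v : V} (p : T.Walk u v), p.IsPath → u ∈ A → v ∈ A → ∀ w ∈ p.support, w ∈ A)
    (hne : A.Nonempty) : (T.induce A).IsTree := by
  constructor
  · rw [SimpleGraph.connected_iff]
    refine ⟨?_, ⟨⟨hne.choose, hne.choose_spec⟩⟩⟩
    rintro ⟨u, hu⟩ ⟨v, hv⟩
    obtain ⟨p, hp, -⟩ := hT.existsUnique_path u v
    obtain ⟨q, -⟩ := lift_walk p (hcl p hp hu hv) hu hv
    exact ⟨q⟩
  · intro v c hc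
    have := hc.map (f := (SimpleGraph.Embedding.induce (G := T) A).toHom)
      (SimpleGraph.Embedding.induce (G := T) A).injective
    exact hT.IsAcyclic _ this

end induceSec

section matchSec
variable {T : SimpleGraph V} {A : Set V} {M : T.Subgraph}

/-- restriction of a matching to an induced subgraph -/
def restrictM (T : SimpleGraph V) (A : Set V) (M : T.Subgraph) : (T.induce A).Subgraph where
  verts := Set.univ
  Adj a b := M.Adj a.val b.val
  adj_sub h := M.adj_sub h
  edge_vert _ := Set.mem_univ _
  symm := ⟨fun a b h => M.adj_symm h⟩

lemma restrictM_isPerfectMatching (hM : M.IsPerfectMatching)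
    (hA : ∀ v ∈ A, ∀ w, M.Adj v w → w ∈ A) :
    (restrictM T A M).IsPerfectMatching := by
  constructor
  · rintro ⟨v, hv⟩ -
    obtain ⟨w, hw, huniq⟩ := hM.1 (hM.2 v)
    exact ⟨⟨w, hA v hv w hw⟩, hw, fun y hy => Subtype.ext (huniq y.val hy)⟩
  · intro v
    exact Set.mem_univ v

end matchSec

/-- the inductive statement payload -/
def ECond (T : SimpleGraph V) (x y : V) (m : List V) : Prop :=
  (x :: (m ++ [y])).Chain' (T.biPower 3).Adj ∧
  (x :: (m ++ [y])).Nodup ∧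
  (∀ v : V, v ∈ x :: (m ++ [y])) ∧
  (∀ a ∈ m.head?, T.dist y a = 2) ∧
  (∀ a ∈ m.getLast?, T.dist x a = 2)

lemma bip_adj {T : SimpleGraph V} {a b : V} (h : T.dist a b = 1 ∨ T.dist a b = 3) :
    (T.biPower 3).Adj a b := by
  rcases h with h | h <;> refine ⟨?_, ?_⟩ <;> rw [h] <;> decide

lemma ECond.symm {T : SimpleGraph V} {x y : V} {m : List V} (h : ECond T y x m) :
    ECond T x y m.reverse := by
  obtain ⟨h1, h2, h3, h4, h5⟩ := h
  have hrev : (y :: (m ++ [x])).reverse = x :: (m.reverse ++ [y]) := by simp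
  refine ⟨?_, ?_, ?_, ?_, ?_⟩
  · unfold List.Chain' at h1 ⊢
    rw [← hrev, List.isChain_reverse]
    exact h1.imp (fun a b hab => hab.symm)
  · rw [← hrev]
    exact List.nodup_reverse.mpr h2
  · intro v
    have := h3 v
    rw [← hrev, List.mem_reverse]
    exact this
  · rw [List.head?_reverse]
    exact h5
  · rw [List.getLast?_reverse]
    exact h4

lemma walk_of_chain' {G : SimpleGraph V} : ∀ (x : V) (m : List V) {y : V},
    (x :: (m ++ [y])).Chain' G.Adj → ∃ p : G.Walk x y, p.support = x :: (m ++ [y]) := by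
  intro x m
  induction m generalizing x with
  | nil =>
    intro y h
    have hadj : G.Adj x y := (List.isChain_cons_cons.mp h).1
    exact ⟨SimpleGraph.Walk.cons hadj SimpleGraph.Walk.nil, by simp⟩
  | cons a m' ih =>
    intro y h
    unfold List.Chain' at h
    rw [List.cons_append, List.isChain_cons_cons] at h
    obtain ⟨q, hq⟩ := ih a h.2
    exact ⟨SimpleGraph.Walk.cons h.1 q, by simp [hq]⟩

lemma dist_two {T : SimpleGraph V} (hT : T.IsTree) {a b c : V} (h1 : T.Adj a b)
    (h2 : T.Adj b c) (hac : a ≠ c) : T.dist a c = 2 := by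
  have hp : (SimpleGraph.Walk.cons h1 (SimpleGraph.Walk.cons h2 SimpleGraph.Walk.nil)).IsPath := by
    rw [SimpleGraph.Walk.isPath_def]
    simp [h1.ne, h2.ne, hac]
  have := path_length_eq_dist hT hp
  simpa using this.symm

lemma dist_three {T : SimpleGraph V} (hT : T.IsTree) {a b c d : V} (h1 : T.Adj a b)
    (h2 : T.Adj b c) (h3 : T.Adj c d) (hac : a ≠ c) (had : a ≠ d) (hbd : b ≠ d) :
    T.dist a d = 3 := by
  have hp : (SimpleGraph.Walk.cons h1 (SimpleGraph.Walk.cons h2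
      (SimpleGraph.Walk.cons h3 SimpleGraph.Walk.nil))).IsPath := by
    rw [SimpleGraph.Walk.isPath_def]
    simp [h1.ne, h2.ne, h3.ne, hac, had, hbd]
  have := path_length_eq_dist hT hp
  simpa using this.symm

lemma E_step {n : ℕ} {V : Type u} [Fintype V] [DecidableEq V]
    (IH : ∀ (W : Type u) [Fintype W] [DecidableEq W] (T' : SimpleGraph W),
      T'.IsTree → ∀ (M' : T'.Subgraph), M'.IsPerfectMatching → ∀ a b : W, M'.Adj a b →
      Fintype.card W ≤ n → ∃ m : List W, ECond T' a b m)
    (T : SimpleGraph V) (hT : T.IsTree) (M : T.Subgraph) (hM : M.IsPerfectMatching)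
    (x y z : V) (hxy : M.Adj x y) (hcard : Fintype.card V ≤ n + 1)
    (hz : T.Adj x z) (hzy : z ≠ y) : ∃ m : List V, ECond T x y m := by
  classical
  have hTadj : T.Adj x y := M.adj_sub hxy
  have hconn := hT.isConnected
  set A : Set V := {v | XS T x z v} with hA
  set S : Set V := {v | ZS T x z v} with hS
  haveI : Fintype ↥A := Fintype.ofFinite _
  haveI : Fintype ↥S := Fintype.ofFinite _
  have hxA : x ∈ A := xs_x hz
  have hzS : z ∈ S := zs_z hz
  have hdyx : T.dist y x = 1 := SimpleGraph.dist_eq_one_iff_adj.2 hTadj.symm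
  have hyA : y ∈ A := by
    by_contra hy
    have hyz : ZS T x z y := zs_of_not_xs hT hz hy
    unfold ZS at hyz
    rw [hdyx] at hyz
    have : T.dist y z = 0 := by omega
    exact hzy ((hconn.dist_eq_zero_iff.1 this)).symm
  have hpartner_x : ∀ w, M.Adj x w → w = y := by
    intro w hw
    obtain ⟨p, hp, hu⟩ := hM.1 (hM.2 x)
    rw [hu w hw, hu y hxy]
  have hMzx : ¬ M.Adj x z := fun h => hzy (hpartner_x z h)
  have hclA : ∀ {u v : V} (p : T.Walk u v), p.IsPath → u ∈ A → v ∈ A → ∀ w ∈ p.support, w ∈ A :=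
    fun p hp hu hv => xs_closed hT hz p hp hu hv
  have hclS : ∀ {u v : V} (p : T.Walk u v), p.IsPath → u ∈ S → v ∈ S → ∀ w ∈ p.support, w ∈ S :=
    fun p hp hu hv => zs_closed hT hz p hp hu hv
  have hApart : ∀ v ∈ A, ∀ w, M.Adj v w → w ∈ A := by
    intro v hv w hw
    by_contra hwA
    have hwS : ZS T x z w := zs_of_not_xs hT hz hwA
    obtain ⟨hwz, hvx⟩ := crossing' hT hz (M.adj_sub hw).symm hwS hv
    subst hwz hvx
    exact hMzx hw
  have hSpart : ∀ v ∈ S, ∀ w, M.Adj v w → w ∈ S := by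
    intro v hv w hw
    by_contra hwS
    have hwA : XS T x z w := xs_of_not_zs hT hz hwS
    obtain ⟨hvz, hwx⟩ := crossing' hT hz (M.adj_sub hw) hv hwA
    subst hvz hwx
    exact hMzx (M.adj_symm hw)
  have hTA : (T.induce A).IsTree := induce_isTree hT hclA ⟨x, hxA⟩
  have hTS : (T.induce S).IsTree := induce_isTree hT hclS ⟨z, hzS⟩
  have hMA := restrictM_isPerfectMatching (A := A) hM hApart
  have hMS := restrictM_isPerfectMatching (A := S) hM hSpart
  obtain ⟨z', hz', -⟩ := hM.1 (hM.2 z)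
  have hz'S : z' ∈ S := hSpart z hzS z' hz'
  have hTzz' : T.Adj z z' := M.adj_sub hz'
  have hcA : Fintype.card ↥A ≤ n := by
    have : Fintype.card ↥A < Fintype.card V := by
      refine Fintype.card_lt_of_injective_of_notMem Subtype.val Subtype.val_injective (b := z) ?_
      rintro ⟨⟨w, hw⟩, hwz⟩
      have hw' : XS T x z w := hw
      rw [show w = z from hwz] at hw'
      exact not_both (zs_z hz) hw'
    omega
  have hcS : Fintype.card ↥S ≤ n := by
    have : Fintype.card ↥S < Fintype.card V := by
      refine Fintype.card_lt_of_injective_of_notMem Subtype.val Subtype.val_injective (b := x) ?_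
      rintro ⟨⟨w, hw⟩, hwx⟩
      have hw' : ZS T x z w := hw
      rw [show w = x from hwx] at hw'
      exact not_both hw' (xs_x hz)
    omega
  obtain ⟨m₁, hm₁⟩ := IH ↥A (T.induce A) hTA _ hMA ⟨x, hxA⟩ ⟨y, hyA⟩ hxy hcA
  obtain ⟨m₂, hm₂⟩ := IH ↥S (T.induce S) hTS _ hMS ⟨z, hzS⟩ ⟨z', hz'S⟩ hz' hcS
  obtain ⟨hc₁, hn₁, hall₁, hh₁, hl₁⟩ := hm₁
  obtain ⟨hc₂, hn₂, hall₂, hh₂, hl₂⟩ := hm₂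
  have hdA : ∀ (a b : ↥A), (T.induce A).dist a b = T.dist a.val b.val := by
    rintro ⟨a, ha⟩ ⟨b, hb⟩
    exact induce_dist_eq hT hclA ha hb
  have hdS : ∀ (a b : ↥S), (T.induce S).dist a b = T.dist a.val b.val := by
    rintro ⟨a, ha⟩ ⟨b, hb⟩
    exact induce_dist_eq hT hclS ha hb
  have hAS : ∀ v, v ∈ A → v ∈ S → False := fun v h1 h2 => not_both h2 h1
  -- mapped lists
  have hchain₁ : (x :: (m₁.map Subtype.val ++ [y])).Chain' (T.biPower 3).Adj := by
    have hmap : ((⟨x, hxA⟩ :: (m₁ ++ [⟨y, hyA⟩])).map (Subtype.val : ↥A → V)).Chain'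
        (T.biPower 3).Adj := by
      unfold List.Chain' at hc₁ ⊢
      rw [List.isChain_map]
      refine hc₁.imp ?_
      intro a b hab
      obtain ⟨h1, h2⟩ := hab
      rw [hdA a b] at h1 h2
      exact ⟨h1, h2⟩
    simpa using hmap
  have hchain₂ : (z :: (m₂.map Subtype.val ++ [z'])).Chain' (T.biPower 3).Adj := by
    have hmap : ((⟨z, hzS⟩ :: (m₂ ++ [⟨z', hz'S⟩])).map (Subtype.val : ↥S → V)).Chain'
        (T.biPower 3).Adj := by
      unfold List.Chain' at hc₂ ⊢
      rw [List.isChain_map]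
      refine hc₂.imp ?_
      intro a b hab
      obtain ⟨h1, h2⟩ := hab
      rw [hdS a b] at h1 h2
      exact ⟨h1, h2⟩
    simpa using hmap
  have hmemA : ∀ a ∈ m₁.map (Subtype.val : ↥A → V), a ∈ A := by
    intro a ha
    obtain ⟨⟨b, hb⟩, -, rfl⟩ := List.mem_map.1 ha
    exact hb
  have hmemS : ∀ a ∈ m₂.map (Subtype.val : ↥S → V), a ∈ S := by
    intro a ha
    obtain ⟨⟨b, hb⟩, -, rfl⟩ := List.mem_map.1 ha
    exact hb
  -- ne facts
  have hzx : z ≠ x := hz.ne'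
  have hxyne : x ≠ y := hTadj.ne
  have hzz' : z ≠ z' := hTzz'.ne
  have hz'x : z' ≠ x := fun h => hAS x hxA (by rw [← h]; exact hz'S)
  have hz'y : z' ≠ y := fun h => hAS y hyA (by rw [← h]; exact hz'S)
  have hdxz : T.dist x z = 1 := SimpleGraph.dist_eq_one_iff_adj.2 hz
  have hdyz : T.dist y z = 2 := by
    have : XS T x z y := hyA
    unfold XS at this
    rw [hdyx] at this
    exact this
  have hdxz' : T.dist x z' = 2 := dist_two hT hz hTzz' (Ne.symm hz'x)
  have hdz'y : T.dist z' y = 3 :=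
    dist_three hT hTzz'.symm hz.symm hTadj hz'x hz'y hzy
  -- junction 1 : last of (x :: m₁v) is biPower-adjacent to z
  have hjun1 : ∀ a ∈ (x :: m₁.map (Subtype.val : ↥A → V)).getLast?, (T.biPower 3).Adj a z := by
    intro a ha
    rcases m₁.eq_nil_or_concat with rfl | ⟨l, b, rfl⟩
    · simp only [List.map_nil, List.getLast?_singleton, Option.mem_some_iff] at ha
      subst ha
      exact bip_adj (Or.inl hdxz)
    · simp only [List.concat_eq_append] at hl₁ ha
      have hb2 : (T.induce A).dist ⟨x, hxA⟩ b = 2 := hl₁ b (by simp)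
      rw [hdA] at hb2
      have hbXS : XS T x z b.val := b.2
      unfold XS at hbXS
      rw [SimpleGraph.dist_comm (u := (b : V)) (v := x), hb2] at hbXS
      have hav : a = b.val := by
        have : (x :: (l ++ [b]).map Subtype.val).getLast? = some b.val := by
          rw [List.map_append]
          rw [show x :: ((l.map Subtype.val) ++ [b].map Subtype.val)
            = (x :: l.map Subtype.val) ++ [b.val] from by simp]
          exact List.getLast?_concat
        rw [this, Option.mem_some_iff] at ha
        exact ha.symm
      rw [hav]
      exact bip_adj (Or.inr hbXS)
  refine ⟨m₁.map Subtype.val ++ (z :: (m₂.map Subtype.val ++ [z'])), ?_, ?_, ?_, ?_, ?_⟩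
  · -- Chain'
    rw [show x :: ((m₁.map Subtype.val ++ (z :: (m₂.map Subtype.val ++ [z']))) ++ [y])
      = (x :: m₁.map Subtype.val) ++ ((z :: (m₂.map Subtype.val ++ [z'])) ++ [y]) from by simp]
    refine List.isChain_append.2 ⟨?_, ?_, ?_⟩
    · exact ((List.isChain_append (l₁ := x :: m₁.map Subtype.val) (l₂ := [y])).1 hchain₁).1
    · refine List.isChain_append.2 ⟨hchain₂, List.isChain_singleton y, ?_⟩
      intro a ha b hb
      simp only [Option.mem_some_iff, List.head?_cons] at hb
      rw [show (z :: (m₂.map Subtype.val ++ [z'])) = (z :: m₂.map Subtype.val) ++ [z'] from by simp,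
        List.getLast?_concat] at ha
      simp only [Option.mem_some_iff] at ha
      subst ha
      rw [← hb]
      exact bip_adj (Or.inr hdz'y)
    · intro a ha b hb
      simp only [List.cons_append, List.head?_cons, Option.mem_some_iff] at hb
      subst hb
      exact hjun1 a ha
  · -- Nodup
    rw [show x :: ((m₁.map Subtype.val ++ (z :: (m₂.map Subtype.val ++ [z']))) ++ [y])
      = (x :: m₁.map Subtype.val) ++ ((z :: (m₂.map Subtype.val ++ [z'])) ++ [y]) from by simp]
    have hnod₁ : ((x :: m₁.map Subtype.val) ++ [y]).Nodup := by
      have := hn₁.map (Subtype.val_injective (p := fun v => v ∈ A))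
      simpa using this
    have hnod₂ : (z :: (m₂.map Subtype.val ++ [z'])).Nodup := by
      have := hn₂.map (Subtype.val_injective (p := fun v => v ∈ S))
      simpa using this
    rw [List.nodup_append]
    refine ⟨(List.nodup_append.1 hnod₁).1, ?_, ?_⟩
    · rw [List.nodup_append]
      refine ⟨hnod₂, List.nodup_singleton y, ?_⟩
      intro a ha b hb hay
      simp only [List.mem_singleton] at hb
      rw [hay, hb] at ha
      simp only [List.mem_cons, List.mem_append, List.mem_singleton, List.not_mem_nil,
        or_false] at ha
      rcases ha with h | h | h
      · exact hzy h.symm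
      · exact hAS y hyA (hmemS y h)
      · exact hz'y h.symm
    · intro a ha b' hb hab
      subst hab
      have haA : a ∈ A := by
        simp only [List.mem_cons] at ha
        rcases ha with rfl | ha
        · exact hxA
        · exact hmemA a ha
      simp only [List.mem_append, List.mem_cons, List.mem_singleton, List.not_mem_nil,
        or_false] at hb
      rcases hb with (rfl | hb | rfl) | rfl
      · exact hAS a haA hzS
      · exact hAS a haA (hmemS a hb)
      · exact hAS a haA hz'S
      · exact (List.disjoint_of_nodup_append hnod₁) ha (by simp)
  · -- completeness
    intro v
    simp only [List.mem_cons, List.mem_append, List.mem_singleton, List.not_mem_nil, or_false]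
    rcases adj_dist_cases hT hz v with hv | hv
    · -- v ∈ S
      have := hall₂ ⟨v, hv⟩
      simp only [List.mem_cons, List.mem_append, List.mem_singleton, List.not_mem_nil,
        or_false] at this
      rcases this with h | h | h
      · have hvz : v = z := congrArg Subtype.val h
        tauto
      · have hvm : v ∈ m₂.map Subtype.val := List.mem_map_of_mem h
        tauto
      · have hvz' : v = z' := congrArg Subtype.val h
        tauto
    · -- v ∈ A
      have := hall₁ ⟨v, hv⟩
      simp only [List.mem_cons, List.mem_append, List.mem_singleton, List.not_mem_nil,
        or_false] at this
      rcases this with h | h | h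
      · have hvx : v = x := congrArg Subtype.val h
        tauto
      · have hvm : v ∈ m₁.map Subtype.val := List.mem_map_of_mem h
        tauto
      · have hvy : v = y := congrArg Subtype.val h
        tauto
  · -- head condition
    intro a ha
    cases m₁ with
    | nil =>
      simp only [List.map_nil, List.nil_append, List.head?_cons, Option.mem_some_iff] at ha
      subst ha
      exact hdyz
    | cons b rest =>
      simp only [List.map_cons, List.cons_append, List.head?_cons, Option.mem_some_iff] at ha
      subst ha
      have := hh₁ b (by simp)
      rw [hdA] at this
      exact this
  · -- last condition
    intro a ha
    rw [show m₁.map Subtype.val ++ (z :: (m₂.map Subtype.val ++ [z']))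
      = (m₁.map Subtype.val ++ (z :: m₂.map Subtype.val)) ++ [z'] from by simp,
      List.getLast?_concat] at ha
    simp only [Option.mem_some_iff] at ha
    subst ha
    exact hdxz'

lemma key (n : ℕ) : ∀ (V : Type u) [Fintype V] [DecidableEq V] (T : SimpleGraph V),
    T.IsTree → ∀ (M : T.Subgraph), M.IsPerfectMatching → ∀ x y : V, M.Adj x y →
    Fintype.card V ≤ n → ∃ m : List V, ECond T x y m := by
  induction n with
  | zero =>
    intro V _ _ T _ M _ x y hxy hcard
    have : 0 < Fintype.card V := Fintype.card_pos_iff.2 ⟨x⟩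
    omega
  | succ n IH =>
    intro V _ _ T hT M hM x y hxy hcard
    have hTadj : T.Adj x y := M.adj_sub hxy
    by_cases hex : ∃ z, T.Adj x z ∧ z ≠ y
    · obtain ⟨z, hz1, hz2⟩ := hex
      exact E_step IH T hT M hM x y z hxy hcard hz1 hz2
    by_cases hey : ∃ z, T.Adj y z ∧ z ≠ x
    · obtain ⟨z, hz1, hz2⟩ := hey
      obtain ⟨m, hm⟩ := E_step IH T hT M hM y x z (M.adj_symm hxy) hcard hz1 hz2
      exact ⟨m.reverse, hm.symm⟩
    · push_neg at hex hey
      have hall : ∀ v : V, v = x ∨ v = y := by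
        intro v
        by_contra hv
        push_neg at hv
        obtain ⟨hvx, hvy⟩ := hv
        obtain ⟨p⟩ := hT.isConnected x v
        obtain ⟨d, hd, hdf, hds⟩ := p.exists_boundary_dart {x, y} (by simp)
          (by simp [hvx, hvy])
        simp only [Set.mem_insert_iff, Set.mem_singleton_iff] at hdf hds
        push_neg at hds
        rcases hdf with h | h
        · exact hds.2 (hex d.snd (h ▸ d.adj))
        · exact hds.1 (hey d.snd (h ▸ d.adj))
      refine ⟨[], ?_, ?_, ?_, ?_, ?_⟩
      · exact List.isChain_cons_cons.2 ⟨bip_adj (Or.inl (SimpleGraph.dist_eq_one_iff_adj.2 hTadj)),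
          List.isChain_singleton y⟩
      · simp [hTadj.ne]
      · intro v
        rcases hall v with rfl | rfl <;> simp
      · simp
      · simp

/-- Let `T` be a finite tree with a perfect matching `M` and at least two
vertices, and let `xy ∈ M`.  Then `T_B^3` has a Hamiltonian path from `x` to
`y`. -/
theorem tree_biPower_three_hamiltonian_path {V : Type*} [Fintype V] [DecidableEq V]
    (T : SimpleGraph V) (hT : T.IsTree) (M : T.Subgraph) (hM : M.IsPerfectMatching)
    (hcard : 2 ≤ Fintype.card V) (x y : V) (hxy : M.Adj x y) :
    ∃ p : (T.biPower 3).Walk x y, p.IsHamiltonian := by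
  obtain ⟨m, hc, hn, hall, -, -⟩ := key (Fintype.card V) V T hT M hM x y hxy le_rfl
  obtain ⟨p, hp⟩ := walk_of_chain' x m hc
  refine ⟨p, ?_⟩
  intro v
  rw [hp]
  exact List.count_eq_one_of_mem hn (hall v)
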